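/- arXiv:2410.07450 — 4 statements merged into one kernel-verified Lean document; each statement's English description precedes it below -/
import Mathlib

section
/- Let X be a real Banach space, let a < b be reals, I = [a,b], let φ : X → ℝ be continuous and linear, and let ψ : X → ℝ be Lipschitz continuous with Lipschitz constant L. Let α, β : [a,b] → ℝ be continuous, C¹ on (a,b), with α'(λ) ≠ 0 for all λ ∈ (a,b) and g := β'/α' strictly monotone on (a,b), and assume either (i3) g increasing on (a,b) and α'(λ)ψ(x) < 0 for all λ ∈ (a,b) and x with ψ(x) ≠ 0, or (i4) g decreasing on (a,b) and α'(λ)ψ(x) > 0 for all λ ∈ (a,b) and x with ψ(x) ≠ 0. Finally assume that the set D := { λ ∈ [a,b] : |β(λ)|·L < |α(λ)|·‖φ‖_{X*} } is dense in [a,b]. Then, with h : ℝ → [a,b] defined as in Theorem 1.1 (h(μ) = g⁻¹(μ) for μ ∈ g((a,b)), h(μ) = a if (μ ≤ inf g and (i3)) or (μ ≥ sup g and (i4)), h(μ) = b otherwise), one has: Φ(x) = α(h(−φ(x)/ψ(x)))φ(x) + β(h(−φ(x)/ψ(x)))ψ(x) for every x with ψ(x) ≠ 0; Φ(x) = max{α(a)φ(x),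 α(b)φ(x)} for every x with ψ(x) = 0; and inf_{x∈X} Φ(x) = sup_{λ∈[a,b]\D} inf_{x∈X} ( α(λ)φ(x) + β(λ)ψ(x) ). -/
open Set Filter

lemma aux_mono {a b p q : ℝ} {α β α' β' : ℝ → ℝ}
    (hα : ContinuousOn α (Icc a b)) (hβ : ContinuousOn β (Icc a b))
    (hα' : ∀ l ∈ Ioo a b, HasDerivAt α (α' l) l)
    (hβ' : ∀ l ∈ Ioo a b, HasDerivAt β (β' l) l)
    (hap : a ≤ p) (hqb : q ≤ b)
    (c₁ c₂ : ℝ)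
    (hsign : ∀ l ∈ Ioo p q, 0 ≤ α' l * c₁ + β' l * c₂) :
    MonotoneOn (fun l => α l * c₁ + β l * c₂) (Icc p q) := by
  have hsub : Icc p q ⊆ Icc a b := Icc_subset_Icc hap hqb
  have hsub' : Ioo p q ⊆ Ioo a b := Ioo_subset_Ioo hap hqb
  have hder : ∀ l ∈ Ioo p q, HasDerivAt (fun l => α l * c₁ + β l * c₂)
      (α' l * c₁ + β' l * c₂) l := fun l hl =>
    ((hα' l (hsub' hl)).mul_const c₁).add ((hβ' l (hsub' hl)).mul_const c₂)
  apply monotoneOn_of_deriv_nonneg (convex_Icc p q)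
      (((hα.mono hsub).mul continuousOn_const).add ((hβ.mono hsub).mul continuousOn_const))
  · intro l hl
    rw [interior_Icc] at hl
    exact (hder l hl).differentiableAt.differentiableWithinAt
  · intro l hl
    rw [interior_Icc] at hl
    change 0 ≤ deriv (fun l => α l * c₁ + β l * c₂) l
    rw [(hder l hl).deriv]
    exact hsign l hl

lemma aux_anti {a b p q : ℝ} {α β α' β' : ℝ → ℝ}
    (hα : ContinuousOn α (Icc a b)) (hβ : ContinuousOn β (Icc a b))
    (hα' : ∀ l ∈ Ioo a b, HasDerivAt α (α' l) l)
    (hβ' : ∀ l ∈ Ioo a b, HasDerivAt β (β' l) l)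
    (hap : a ≤ p) (hqb : q ≤ b)
    (c₁ c₂ : ℝ)
    (hsign : ∀ l ∈ Ioo p q, α' l * c₁ + β' l * c₂ ≤ 0) :
    AntitoneOn (fun l => α l * c₁ + β l * c₂) (Icc p q) := by
  have hsub : Icc p q ⊆ Icc a b := Icc_subset_Icc hap hqb
  have hsub' : Ioo p q ⊆ Ioo a b := Ioo_subset_Ioo hap hqb
  have hder : ∀ l ∈ Ioo p q, HasDerivAt (fun l => α l * c₁ + β l * c₂)
      (α' l * c₁ + β' l * c₂) l := fun l hl =>
    ((hα' l (hsub' hl)).mul_const c₁).add ((hβ' l (hsub' hl)).mul_const c₂)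
  apply antitoneOn_of_deriv_nonpos (convex_Icc p q)
      (((hα.mono hsub).mul continuousOn_const).add ((hβ.mono hsub).mul continuousOn_const))
  · intro l hl
    rw [interior_Icc] at hl
    exact (hder l hl).differentiableAt.differentiableWithinAt
  · intro l hl
    rw [interior_Icc] at hl
    change deriv (fun l => α l * c₁ + β l * c₂) l ≤ 0
    rw [(hder l hl).deriv]
    exact hsign l hl

-- biSup over Icc equals value at max point
lemma aux_supeq {a b : ℝ} (F : ℝ → ℝ) (l₀ : ℝ) (hl₀ : l₀ ∈ Icc a b)
    (hmax : ∀ l ∈ Icc a b, F l ≤ F l₀) :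
    (⨆ l ∈ Icc a b, ((F l : ℝ) : EReal)) = ((F l₀ : ℝ) : EReal) := by
  apply le_antisymm
  · exact iSup₂_le fun l hl => EReal.coe_le_coe_iff.2 (hmax l hl)
  · exact le_iSup₂_of_le l₀ hl₀ le_rfl

-- sInf membership for subsets of Icc with level condition
lemma aux_inf_mem {a b r : ℝ} {F : ℝ → ℝ} {S : Set ℝ} (hS : S.Nonempty)
    (hsub : S ⊆ Icc a b) (hcont : ContinuousOn F (Icc a b))
    (hF : ∀ l ∈ S, r ≤ F l) :
    sInf S ∈ Icc a b ∧ r ≤ F (sInf S) := by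
  obtain ⟨l₁, hl₁⟩ := hS
  have hbdd : BddBelow S := ⟨a, fun l hl => (hsub hl).1⟩
  have hmem : sInf S ∈ Icc a b :=
    ⟨le_csInf ⟨l₁, hl₁⟩ fun l hl => (hsub hl).1, (csInf_le hbdd hl₁).trans (hsub hl₁).2⟩
  refine ⟨hmem, ?_⟩
  have hcl : sInf S ∈ closure S := csInf_mem_closure ⟨l₁, hl₁⟩ hbdd
  haveI : (nhdsWithin (sInf S) S).NeBot := mem_closure_iff_nhdsWithin_neBot.mp hcl
  have htd : Tendsto F (nhdsWithin (sInf S) S) (nhds (F (sInf S))) :=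
    (hcont (sInf S) hmem).mono_left (nhdsWithin_mono _ hsub)
  exact ge_of_tendsto htd (eventually_mem_nhdsWithin.mono hF)

lemma aux_sup_mem {a b r : ℝ} {F : ℝ → ℝ} {S : Set ℝ} (hS : S.Nonempty)
    (hsub : S ⊆ Icc a b) (hcont : ContinuousOn F (Icc a b))
    (hF : ∀ l ∈ S, r ≤ F l) :
    sSup S ∈ Icc a b ∧ r ≤ F (sSup S) := by
  obtain ⟨l₁, hl₁⟩ := hS
  have hbdd : BddAbove S := ⟨b, fun l hl => (hsub hl).2⟩
  have hmem : sSup S ∈ Icc a b :=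
    ⟨(hsub hl₁).1.trans (le_csSup hbdd hl₁), csSup_le ⟨l₁, hl₁⟩ fun l hl => (hsub hl).2⟩
  refine ⟨hmem, ?_⟩
  have hcl : sSup S ∈ closure S := csSup_mem_closure ⟨l₁, hl₁⟩ hbdd
  haveI : (nhdsWithin (sSup S) S).NeBot := mem_closure_iff_nhdsWithin_neBot.mp hcl
  have htd : Tendsto F (nhdsWithin (sSup S) S) (nhds (F (sSup S))) :=
    (hcont (sSup S) hmem).mono_left (nhdsWithin_mono _ hsub)
  exact ge_of_tendsto htd (eventually_mem_nhdsWithin.mono hF)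

set_option maxHeartbeats 3000000

/-- Theorem 3.4: X Banach, φ continuous linear, ψ L-Lipschitz, with the set
D = {λ : |β(λ)|L < |α(λ)|‖φ‖} dense in [a,b].  Then Φ has the explicit form of
Theorem 1.1 and inf Φ = sup over [a,b] \ D of the partial infima. -/
theorem stmt11
    {X : Type*} [NormedAddCommGroup X] [NormedSpace ℝ X] [CompleteSpace X]
    (a b : ℝ) (hab : a < b)
    (φ : X →L[ℝ] ℝ) (ψ : X → ℝ) (L : NNReal) (hψlip : LipschitzWith L ψ)
    (α β α' β' : ℝ → ℝ)
    (hα : ContinuousOn α (Icc a b)) (hβ : ContinuousOn β (Icc a b))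
    -- (i₂)
    (hα' : ∀ l ∈ Ioo a b, HasDerivAt α (α' l) l)
    (hβ' : ∀ l ∈ Ioo a b, HasDerivAt β (β' l) l)
    (hα'c : ContinuousOn α' (Ioo a b)) (hβ'c : ContinuousOn β' (Ioo a b))
    (hα'0 : ∀ l ∈ Ioo a b, α' l ≠ 0)
    (g : ℝ → ℝ) (hg : ∀ l ∈ Ioo a b, g l = β' l / α' l)
    -- the function h : ℝ → [a,b] of Theorem 1.1
    (h : ℝ → ℝ)
    (hhmem : ∀ μ : ℝ, h μ ∈ Icc a b)
    (hhinv : ∀ μ ∈ g '' Ioo a b, h μ ∈ Ioo a b ∧ g (h μ) = μ)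
    -- (i₃) or (i₄), with the corresponding boundary values of h
    (hcase :
      (StrictMonoOn g (Ioo a b) ∧
        (∀ l ∈ Ioo a b, ∀ x : X, ψ x ≠ 0 → α' l * ψ x < 0) ∧
        (∀ μ : ℝ, (∀ l ∈ Ioo a b, μ ≤ g l) → h μ = a) ∧
        (∀ μ : ℝ, (∀ l ∈ Ioo a b, g l ≤ μ) → h μ = b)) ∨
      (StrictAntiOn g (Ioo a b) ∧
        (∀ l ∈ Ioo a b, ∀ x : X, ψ x ≠ 0 → 0 < α' l * ψ x) ∧
        (∀ μ : ℝ, (∀ l ∈ Ioo a b, g l ≤ μ) → h μ = a) ∧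
        (∀ μ : ℝ, (∀ l ∈ Ioo a b, μ ≤ g l) → h μ = b)))
    -- density of D in [a,b]
    (hdense : Icc a b ⊆ closure
      {l : ℝ | l ∈ Icc a b ∧ |β l| * (L : ℝ) < |α l| * ‖φ‖}) :
    (∀ x : X, ψ x ≠ 0 →
      (⨆ l ∈ Icc a b, ((α l * φ x + β l * ψ x : ℝ) : EReal)) =
        ((α (h (-(φ x / ψ x))) * φ x + β (h (-(φ x / ψ x))) * ψ x : ℝ) : EReal)) ∧
    (∀ x : X, ψ x = 0 →
      (⨆ l ∈ Icc a b, ((α l * φ x + β l * ψ x : ℝ) : EReal)) =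
        ((max (α a * φ x) (α b * φ x) : ℝ) : EReal)) ∧
    (⨅ x : X, ⨆ l ∈ Icc a b, ((α l * φ x + β l * ψ x : ℝ) : EReal)) =
      (⨆ l ∈ (Icc a b \ {l : ℝ | l ∈ Icc a b ∧ |β l| * (L : ℝ) < |α l| * ‖φ‖}),
        ⨅ x : X, ((α l * φ x + β l * ψ x : ℝ) : EReal)) := by
  have haIcc : a ∈ Icc a b := left_mem_Icc.2 hab.le
  have hbIcc : b ∈ Icc a b := right_mem_Icc.2 hab.le
  have hFcont : ∀ x : X, ContinuousOn (fun l => α l * φ x + β l * ψ x) (Icc a b) :=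
    fun x => (hα.mul continuousOn_const).add (hβ.mul continuousOn_const)
  -- sign constancy of α'
  have signα : (∀ l ∈ Ioo a b, 0 < α' l) ∨ (∀ l ∈ Ioo a b, α' l < 0) := by
    obtain ⟨l₀, hl₀⟩ := nonempty_Ioo.2 hab
    rcases (hα'0 l₀ hl₀).lt_or_gt with hneg | hpos
    · right
      intro l hl
      by_contra hcon
      push_neg at hcon
      have hcon' : 0 < α' l := hcon.lt_of_ne' (hα'0 l hl)
      have hsub : uIcc l₀ l ⊆ Ioo a b := Set.ordConnected_Ioo.uIcc_subset hl₀ hl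
      have := intermediate_value_uIcc (hα'c.mono hsub)
      have h0 : (0:ℝ) ∈ uIcc (α' l₀) (α' l) := by
        rw [mem_uIcc]; left; exact ⟨hneg.le, hcon'.le⟩
      obtain ⟨c, hc, hc0⟩ := this h0
      exact hα'0 c (hsub hc) hc0
    · left
      intro l hl
      by_contra hcon
      push_neg at hcon
      have hcon' : α' l < 0 := hcon.lt_of_ne (hα'0 l hl)
      have hsub : uIcc l₀ l ⊆ Ioo a b := Set.ordConnected_Ioo.uIcc_subset hl₀ hl
      have := intermediate_value_uIcc (hα'c.mono hsub)
      have h0 : (0:ℝ) ∈ uIcc (α' l₀) (α' l) := by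
        rw [mem_uIcc]; right; exact ⟨hcon'.le, hpos.le⟩
      obtain ⟨c, hc, hc0⟩ := this h0
      exact hα'0 c (hsub hc) hc0
  -- continuity of g on Ioo
  have hgc : ContinuousOn g (Ioo a b) :=
    (hβ'c.div hα'c hα'0).congr hg
  -- derivative product formula
  have hprod : ∀ (x : X), ψ x ≠ 0 → ∀ l ∈ Ioo a b,
      α' l * φ x + β' l * ψ x = (α' l * ψ x) * (g l - (-(φ x / ψ x))) := by
    intro x hx l hl
    have h0 := hα'0 l hl
    rw [hg l hl]
    field_simp
    ring
  -- KEY: derivative sign pattern is + then -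
  have KEY : ∀ (x : X), ∀ l₁ ∈ Ioo a b, ∀ l₂ ∈ Ioo a b, l₁ < l₂ →
      0 < α' l₂ * φ x + β' l₂ * ψ x → 0 ≤ α' l₁ * φ x + β' l₁ * ψ x := by
    intro x l₁ hl₁ l₂ hl₂ hlt hpos
    by_cases hψx : ψ x = 0
    · rw [hψx] at hpos ⊢
      rcases signα with hsa | hsa
      · nlinarith [hsa l₁ hl₁, hsa l₂ hl₂]
      · nlinarith [hsa l₁ hl₁, hsa l₂ hl₂]
    · rw [hprod x hψx l₂ hl₂] at hpos
      rw [hprod x hψx l₁ hl₁]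
      rcases hcase with ⟨hgm, hs, -, -⟩ | ⟨hgm, hs, -, -⟩
      · have h1 := hs l₁ hl₁ x hψx
        have h2 := hs l₂ hl₂ x hψx
        have hg2 : g l₂ - (-(φ x / ψ x)) < 0 := by nlinarith
        have hg12 : g l₁ < g l₂ := hgm hl₁ hl₂ hlt
        nlinarith
      · have h1 := hs l₁ hl₁ x hψx
        have h2 := hs l₂ hl₂ x hψx
        have hg2 : 0 < g l₂ - (-(φ x / ψ x)) := by nlinarith
        have hg12 : g l₂ < g l₁ := hgm hl₁ hl₂ hlt
        nlinarith
  -- quasiconcavity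
  have QC : ∀ (x : X), ∀ l₁ l₂ l₃ : ℝ, l₁ ∈ Icc a b → l₃ ∈ Icc a b → l₁ ≤ l₂ → l₂ ≤ l₃ →
      min (α l₁ * φ x + β l₁ * ψ x) (α l₃ * φ x + β l₃ * ψ x) ≤ α l₂ * φ x + β l₂ * ψ x := by
    intro x l₁ l₂ l₃ h1 h3 h12 h23
    by_cases hmono : ∀ l ∈ Ioo l₁ l₂, 0 ≤ α' l * φ x + β' l * ψ x
    · have := aux_mono hα hβ hα' hβ' h1.1 ((h23.trans h3.2)) (φ x) (ψ x) hmono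
      exact min_le_of_left_le (this ⟨le_refl l₁, h12⟩ ⟨h12, le_refl l₂⟩ h12)
    · push_neg at hmono
      obtain ⟨θ, hθ, hθneg⟩ := hmono
      have hθIoo : θ ∈ Ioo a b := ⟨h1.1.trans_lt hθ.1, hθ.2.trans_le (h23.trans h3.2)⟩
      have hanti : ∀ l ∈ Ioo l₂ l₃, α' l * φ x + β' l * ψ x ≤ 0 := by
        intro l hl
        by_contra hcon
        push_neg at hcon
        have hlIoo : l ∈ Ioo a b := ⟨h1.1.trans_lt (h12.trans_lt hl.1), hl.2.trans_le h3.2⟩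
        exact absurd (KEY x θ hθIoo l hlIoo (hθ.2.trans_le (le_of_lt hl.1)) hcon)
          (not_le.mpr hθneg)
      have := aux_anti hα hβ hα' hβ' (h1.1.trans h12) h3.2 (φ x) (ψ x) hanti
      exact min_le_of_right_le (this ⟨le_refl l₂, h23⟩ ⟨h23, le_refl l₃⟩ h23)
  -- part 1: max location for ψ x ≠ 0
  have MAXLOC : ∀ x : X, ψ x ≠ 0 → ∀ l ∈ Icc a b,
      α l * φ x + β l * ψ x ≤ α (h (-(φ x / ψ x))) * φ x + β (h (-(φ x / ψ x))) * ψ x := by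
    intro x hψx
    generalize hμE : -(φ x / ψ x) = μ at *
    rcases hcase with ⟨hgm, hs, hha, hhb⟩ | ⟨hgm, hs, hha, hhb⟩
    · by_cases h1 : ∀ l ∈ Ioo a b, μ ≤ g l
      · rw [hha μ h1]
        have hanti : AntitoneOn (fun l => α l * φ x + β l * ψ x) (Icc a b) := by
          apply aux_anti hα hβ hα' hβ' le_rfl le_rfl
          intro l hl
          rw [hprod x hψx l hl]
          nlinarith [hs l hl x hψx, h1 l hl]
        exact fun l hl => hanti haIcc hl hl.1
      · by_cases h2 : ∀ l ∈ Ioo a b, g l ≤ μ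
        · rw [hhb μ h2]
          have hmono : MonotoneOn (fun l => α l * φ x + β l * ψ x) (Icc a b) := by
            apply aux_mono hα hβ hα' hβ' le_rfl le_rfl
            intro l hl
            rw [hprod x hψx l hl]
            nlinarith [hs l hl x hψx, h2 l hl]
          exact fun l hl => hmono hl hbIcc hl.2
        · push_neg at h1 h2
          obtain ⟨l₁, hl₁, hgl₁⟩ := h1
          obtain ⟨l₂, hl₂, hgl₂⟩ := h2
          have hsub : uIcc l₁ l₂ ⊆ Ioo a b := Set.ordConnected_Ioo.uIcc_subset hl₁ hl₂
          have himg : μ ∈ g '' Ioo a b := by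
            have h0 : μ ∈ uIcc (g l₁) (g l₂) := by
              rw [mem_uIcc]; left; exact ⟨hgl₁.le, hgl₂.le⟩
            obtain ⟨c, hc, hc0⟩ := intermediate_value_uIcc (hgc.mono hsub) h0
            exact ⟨c, hsub hc, hc0⟩
          obtain ⟨hl₀, hgl₀⟩ := hhinv μ himg
          have hmono : MonotoneOn (fun l => α l * φ x + β l * ψ x) (Icc a (h μ)) := by
            apply aux_mono hα hβ hα' hβ' le_rfl hl₀.2.le
            intro l hl
            have hlI : l ∈ Ioo a b := ⟨hl.1, hl.2.trans hl₀.2⟩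
            rw [hprod x hψx l hlI]
            have : g l < μ := hgl₀ ▸ hgm hlI hl₀ hl.2
            nlinarith [hs l hlI x hψx]
          have hanti : AntitoneOn (fun l => α l * φ x + β l * ψ x) (Icc (h μ) b) := by
            apply aux_anti hα hβ hα' hβ' hl₀.1.le le_rfl
            intro l hl
            have hlI : l ∈ Ioo a b := ⟨hl₀.1.trans hl.1, hl.2⟩
            rw [hprod x hψx l hlI]
            have : μ < g l := hgl₀ ▸ hgm hl₀ hlI hl.1
            nlinarith [hs l hlI x hψx]
          intro l hl
          rcases le_total l (h μ) with hle | hle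
          · exact hmono ⟨hl.1, hle⟩ ⟨hl₀.1.le, le_refl _⟩ hle
          · exact hanti ⟨le_refl _, hl₀.2.le⟩ ⟨hle, hl.2⟩ hle
    · by_cases h1 : ∀ l ∈ Ioo a b, μ ≤ g l
      · rw [hhb μ h1]
        have hmono : MonotoneOn (fun l => α l * φ x + β l * ψ x) (Icc a b) := by
          apply aux_mono hα hβ hα' hβ' le_rfl le_rfl
          intro l hl
          rw [hprod x hψx l hl]
          nlinarith [hs l hl x hψx, h1 l hl]
        exact fun l hl => hmono hl hbIcc hl.2
      · by_cases h2 : ∀ l ∈ Ioo a b, g l ≤ μ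
        · rw [hha μ h2]
          have hanti : AntitoneOn (fun l => α l * φ x + β l * ψ x) (Icc a b) := by
            apply aux_anti hα hβ hα' hβ' le_rfl le_rfl
            intro l hl
            rw [hprod x hψx l hl]
            nlinarith [hs l hl x hψx, h2 l hl]
          exact fun l hl => hanti haIcc hl hl.1
        · push_neg at h1 h2
          obtain ⟨l₁, hl₁, hgl₁⟩ := h1
          obtain ⟨l₂, hl₂, hgl₂⟩ := h2
          have hsub : uIcc l₁ l₂ ⊆ Ioo a b := Set.ordConnected_Ioo.uIcc_subset hl₁ hl₂
          have himg : μ ∈ g '' Ioo a b := by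
            have h0 : μ ∈ uIcc (g l₁) (g l₂) := by
              rw [mem_uIcc]; left; exact ⟨hgl₁.le, hgl₂.le⟩
            obtain ⟨c, hc, hc0⟩ := intermediate_value_uIcc (hgc.mono hsub) h0
            exact ⟨c, hsub hc, hc0⟩
          obtain ⟨hl₀, hgl₀⟩ := hhinv μ himg
          have hmono : MonotoneOn (fun l => α l * φ x + β l * ψ x) (Icc a (h μ)) := by
            apply aux_mono hα hβ hα' hβ' le_rfl hl₀.2.le
            intro l hl
            have hlI : l ∈ Ioo a b := ⟨hl.1, hl.2.trans hl₀.2⟩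
            rw [hprod x hψx l hlI]
            have : μ < g l := hgl₀ ▸ hgm hlI hl₀ hl.2
            nlinarith [hs l hlI x hψx]
          have hanti : AntitoneOn (fun l => α l * φ x + β l * ψ x) (Icc (h μ) b) := by
            apply aux_anti hα hβ hα' hβ' hl₀.1.le le_rfl
            intro l hl
            have hlI : l ∈ Ioo a b := ⟨hl₀.1.trans hl.1, hl.2⟩
            rw [hprod x hψx l hlI]
            have : g l < μ := hgl₀ ▸ hgm hl₀ hlI hl.1
            nlinarith [hs l hlI x hψx]
          intro l hl
          rcases le_total l (h μ) with hle | hle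
          · exact hmono ⟨hl.1, hle⟩ ⟨hl₀.1.le, le_refl _⟩ hle
          · exact hanti ⟨le_refl _, hl₀.2.le⟩ ⟨hle, hl.2⟩ hle
  have part1 : ∀ x : X, ψ x ≠ 0 →
      (⨆ l ∈ Icc a b, ((α l * φ x + β l * ψ x : ℝ) : EReal)) =
        ((α (h (-(φ x / ψ x))) * φ x + β (h (-(φ x / ψ x))) * ψ x : ℝ) : EReal) := by
    intro x hψx
    exact aux_supeq (fun l => α l * φ x + β l * ψ x) (h (-(φ x / ψ x)))
      (hhmem _) (MAXLOC x hψx)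
  have part2 : ∀ x : X, ψ x = 0 →
      (⨆ l ∈ Icc a b, ((α l * φ x + β l * ψ x : ℝ) : EReal)) =
        ((max (α a * φ x) (α b * φ x) : ℝ) : EReal) := by
    intro x hψx
    have hzero : ∀ l : ℝ, α l * φ x + β l * ψ x = α l * φ x := by
      intro l; rw [hψx]; ring
    have hmm : MonotoneOn (fun l => α l * φ x + β l * ψ x) (Icc a b) ∨
        AntitoneOn (fun l => α l * φ x + β l * ψ x) (Icc a b) := by
      rcases signα with hsa | hsa <;> rcases le_or_gt 0 (φ x) with hφx | hφx
      · left
        apply aux_mono hα hβ hα' hβ' le_rfl le_rfl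
        intro l hl; rw [hψx]; nlinarith [hsa l hl]
      · right
        apply aux_anti hα hβ hα' hβ' le_rfl le_rfl
        intro l hl; rw [hψx]; nlinarith [hsa l hl]
      · right
        apply aux_anti hα hβ hα' hβ' le_rfl le_rfl
        intro l hl; rw [hψx]; nlinarith [hsa l hl]
      · left
        apply aux_mono hα hβ hα' hβ' le_rfl le_rfl
        intro l hl; rw [hψx]; nlinarith [hsa l hl]
    rcases hmm with hm | hm
    · have hmax : ∀ l ∈ Icc a b, α l * φ x + β l * ψ x ≤ α b * φ x + β b * ψ x :=
        fun l hl => hm hl hbIcc hl.2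
      have hab' := hm haIcc hbIcc hab.le
      simp only [hzero] at hab'
      have hEq : α b * φ x + β b * ψ x = max (α a * φ x) (α b * φ x) := by
        rw [hzero b]; exact (max_eq_right hab').symm
      exact (aux_supeq (fun l => α l * φ x + β l * ψ x) b hbIcc hmax).trans
        (congrArg (fun r : ℝ => (r : EReal)) hEq)
    · have hmax : ∀ l ∈ Icc a b, α l * φ x + β l * ψ x ≤ α a * φ x + β a * ψ x :=
        fun l hl => hm haIcc hl hl.1
      have hab' := hm haIcc hbIcc hab.le
      simp only [hzero] at hab'
      have hEq : α a * φ x + β a * ψ x = max (α a * φ x) (α b * φ x) := by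
        rw [hzero a]; exact (max_eq_left hab').symm
      exact (aux_supeq (fun l => α l * φ x + β l * ψ x) a haIcc hmax).trans
        (congrArg (fun r : ℝ => (r : EReal)) hEq)
  refine ⟨part1, part2, ?_⟩

  refine le_antisymm ?_ (iSup₂_le fun l hl => le_iInf fun x =>
    (iInf_le _ x).trans (le_iSup₂_of_le l hl.1 le_rfl))
  by_contra hcon
  push_neg at hcon
  obtain ⟨r, hr1, hr2⟩ := EReal.exists_between_coe_real hcon
  obtain ⟨r'', hr3, hr4⟩ := EReal.exists_between_coe_real hr2
  have hrr : r < r'' := EReal.coe_lt_coe_iff.1 hr3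
  -- every x has a maximizer with value > r''
  have PHI : ∀ x : X, ∃ l₀, l₀ ∈ Icc a b ∧
      (∀ l ∈ Icc a b, α l * φ x + β l * ψ x ≤ α l₀ * φ x + β l₀ * ψ x) ∧
      r'' < α l₀ * φ x + β l₀ * ψ x := by
    intro x
    obtain ⟨l₀, hl₀, hmax⟩ := isCompact_Icc.exists_isMaxOn (nonempty_Icc.2 hab.le) (hFcont x)
    have hmax' : ∀ l ∈ Icc a b, α l * φ x + β l * ψ x ≤ α l₀ * φ x + β l₀ * ψ x :=
      fun l hl => hmax hl
    have h5 : (r'' : EReal) < ((α l₀ * φ x + β l₀ * ψ x : ℝ) : EReal) :=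
      hr4.trans_le ((iInf_le _ x).trans
        (le_of_eq (aux_supeq (fun l => α l * φ x + β l * ψ x) l₀ hl₀ hmax')))
    exact ⟨l₀, hl₀, hmax', EReal.coe_lt_coe_iff.1 h5⟩
  -- decreasing rays for λ ∈ D
  have RAY : ∀ l : ℝ, |β l| * (L : ℝ) < |α l| * ‖φ‖ →
      ∃ (v : X) (c : ℝ), 0 < c ∧ ∀ (x : X) (t : ℝ), 0 ≤ t →
        α l * φ (x + t • v) + β l * ψ (x + t • v) ≤ α l * φ x + β l * ψ x - t * c := by
    intro l hD
    have hβL : (0:ℝ) ≤ |β l| * L := mul_nonneg (abs_nonneg _) L.coe_nonneg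
    have hprod0 : 0 < |α l| * ‖φ‖ := hβL.trans_lt hD
    have hα0 : 0 < |α l| := by nlinarith [abs_nonneg (α l), norm_nonneg φ]
    have hε : 0 < |α l| * ‖φ‖ - |β l| * L := sub_pos.2 hD
    have hlt : ‖φ‖ - (|α l| * ‖φ‖ - |β l| * L) / (2 * |α l|) < ‖φ‖ := by
      have : 0 < (|α l| * ‖φ‖ - |β l| * L) / (2 * |α l|) := by positivity
      linarith
    obtain ⟨u, hu1, hu2⟩ := φ.exists_lt_apply_of_lt_opNorm hlt
    rw [Real.norm_eq_abs] at hu2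
    have habs : |β l| * L + (|α l| * ‖φ‖ - |β l| * L) / 2 ≤ |α l| * |φ u| := by
      have h7 := mul_lt_mul_of_pos_left hu2 hα0
      have h8 : |α l| * (‖φ‖ - (|α l| * ‖φ‖ - |β l| * L) / (2 * |α l|)) =
          |β l| * L + (|α l| * ‖φ‖ - |β l| * L) / 2 := by
        field_simp
        ring
      linarith
    obtain ⟨v, hv1, hαφv⟩ : ∃ v : X, ‖v‖ ≤ 1 ∧ α l * φ v = -(|α l| * |φ u|) := by
      rcases le_or_gt 0 (α l * φ u) with hs | hs
      · refine ⟨-u, by rw [norm_neg]; exact hu1.le, ?_⟩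
        rw [map_neg, mul_neg, ← abs_mul, abs_of_nonneg hs]
      · refine ⟨u, hu1.le, ?_⟩
        rw [← abs_mul, abs_of_neg hs, neg_neg]
    refine ⟨v, (|α l| * ‖φ‖ - |β l| * L) / 2, by positivity, ?_⟩
    intro x t ht
    have hφx : φ (x + t • v) = φ x + t * φ v := by simp
    have hlipb : |ψ (x + t • v) - ψ x| ≤ (L : ℝ) * t := by
      have h9 := hψlip.dist_le_mul (x + t • v) x
      rw [Real.dist_eq, dist_eq_norm, add_sub_cancel_left, norm_smul,
        Real.norm_eq_abs, abs_of_nonneg ht] at h9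
      calc |ψ (x + t • v) - ψ x| ≤ L * (t * ‖v‖) := h9
        _ ≤ L * t := by
          have hm := mul_le_mul_of_nonneg_left (mul_le_mul_of_nonneg_left hv1 ht) L.coe_nonneg
          nlinarith [hm]
    have hβb : β l * ψ (x + t • v) - β l * ψ x ≤ |β l| * ((L : ℝ) * t) :=
      calc β l * ψ (x + t • v) - β l * ψ x = β l * (ψ (x + t • v) - ψ x) := by ring
        _ ≤ |β l * (ψ (x + t • v) - ψ x)| := le_abs_self _
        _ = |β l| * |ψ (x + t • v) - ψ x| := abs_mul _ _
        _ ≤ |β l| * ((L : ℝ) * t) := mul_le_mul_of_nonneg_left hlipb (abs_nonneg _)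
    have hαb : t * (α l * φ v) ≤ -(t * (|β l| * L + (|α l| * ‖φ‖ - |β l| * L) / 2)) := by
      rw [hαφv]
      nlinarith
    rw [hφx]
    nlinarith [hβb, hαb]
  -- every λ ∈ [a,b] admits x with value < r
  have hJlt : ∀ l ∈ Icc a b, ∃ x : X, α l * φ x + β l * ψ x < r := by
    intro l hl
    by_cases hD : |β l| * (L : ℝ) < |α l| * ‖φ‖
    · obtain ⟨v, c, hc, hray⟩ := RAY l hD
      refine ⟨(0 : X) + (max 0 ((α l * φ 0 + β l * ψ 0 - r + 1) / c)) • v, ?_⟩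
      have ht := le_max_left 0 ((α l * φ 0 + β l * ψ 0 - r + 1) / c)
      have h10 := hray 0 _ ht
      have h11 : α l * φ 0 + β l * ψ 0 - r + 1 ≤
          max 0 ((α l * φ 0 + β l * ψ 0 - r + 1) / c) * c :=
        (div_le_iff₀ hc).mp (le_max_right _ _)
      linarith
    · by_contra hcon2
      push_neg at hcon2
      have hle : (r : EReal) ≤ ⨅ x : X, ((α l * φ x + β l * ψ x : ℝ) : EReal) :=
        le_iInf fun x => EReal.coe_le_coe_iff.2 (hcon2 x)
      have : (r : EReal) ≤ ⨆ l ∈ (Icc a b \ {l : ℝ | l ∈ Icc a b ∧ |β l| * (L : ℝ) < |α l| * ‖φ‖}),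
          ⨅ x : X, ((α l * φ x + β l * ψ x : ℝ) : EReal) :=
        hle.trans (le_iSup₂_of_le l ⟨hl, fun hmem => hD hmem.2⟩ le_rfl)
      exact absurd hr1 (not_lt.2 this)
  -- the superlevel intervals
  set I : X → Set ℝ := fun x => {l : ℝ | l ∈ Icc a b ∧ r'' ≤ α l * φ x + β l * ψ x} with hI
  have hIne : ∀ x : X, (I x).Nonempty := by
    intro x
    obtain ⟨l₀, h1, -, h3⟩ := PHI x
    exact ⟨l₀, h1, h3.le⟩
  have hIsub : ∀ x : X, I x ⊆ Icc a b := fun x l hl => hl.1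
  have hIinf : ∀ x : X, sInf (I x) ∈ Icc a b ∧ r'' ≤ α (sInf (I x)) * φ x + β (sInf (I x)) * ψ x :=
    fun x => aux_inf_mem (hIne x) (hIsub x) (hFcont x) (fun l hl => hl.2)
  have hIsup : ∀ x : X, sSup (I x) ∈ Icc a b ∧ r'' ≤ α (sSup (I x)) * φ x + β (sSup (I x)) * ψ x :=
    fun x => aux_sup_mem (hIne x) (hIsub x) (hFcont x) (fun l hl => hl.2)
  have hIbddA : ∀ x : X, BddAbove (I x) := fun x => ⟨b, fun l hl => hl.1.2⟩
  by_cases hpair : ∀ x y : X, sInf (I x) ≤ sSup (I y)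
  · -- Helly: common point lam with all values ≥ r''
    have hrange_ne : (Set.range fun x : X => sInf (I x)).Nonempty := ⟨_, ⟨0, rfl⟩⟩
    have hbdd : BddAbove (Set.range fun x : X => sInf (I x)) := by
      refine ⟨b, ?_⟩
      rintro z ⟨x, rfl⟩
      exact (hIinf x).1.2
    have h1 : a ≤ sSup (Set.range fun x : X => sInf (I x)) :=
      le_trans (hIinf 0).1.1 (le_csSup hbdd ⟨0, rfl⟩)
    have h2 : sSup (Set.range fun x : X => sInf (I x)) ≤ b := by
      refine csSup_le hrange_ne ?_
      rintro z ⟨x, rfl⟩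
      exact (hIinf x).1.2
    have hall : ∀ y : X, r'' ≤ α (sSup (Set.range fun x : X => sInf (I x))) * φ y +
        β (sSup (Set.range fun x : X => sInf (I x))) * ψ y := by
      intro y
      have ha1 : sInf (I y) ≤ sSup (Set.range fun x : X => sInf (I x)) := le_csSup hbdd ⟨y, rfl⟩
      have ha2 : sSup (Set.range fun x : X => sInf (I x)) ≤ sSup (I y) := by
        refine csSup_le hrange_ne ?_
        rintro z ⟨x, rfl⟩
        exact hpair x y
      have hqc := QC y (sInf (I y)) (sSup (Set.range fun x : X => sInf (I x))) (sSup (I y))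
        (hIinf y).1 (hIsup y).1 ha1 ha2
      exact le_trans (le_min (hIinf y).2 (hIsup y).2) hqc
    obtain ⟨x, hx⟩ := hJlt _ ⟨h1, h2⟩
    linarith [hall x]
  · -- two separated intervals
    push_neg at hpair
    obtain ⟨x₂, x₁, hQP⟩ := hpair
    have hQ1 := hIsup x₁
    have hP2 := hIinf x₂
    have hμ₀Icc : (sSup (I x₁) + sInf (I x₂)) / 2 ∈ Icc a b := by
      constructor
      · have := hQ1.1.1; have := hP2.1.1; linarith
      · have := hQ1.1.2; have := hP2.1.2; linarith
    obtain ⟨d, hdIoo, hdD⟩ : ∃ d, d ∈ Ioo (sSup (I x₁)) (sInf (I x₂)) ∧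
        (d ∈ Icc a b ∧ |β d| * (L : ℝ) < |α d| * ‖φ‖) := by
      have hcl := hdense hμ₀Icc
      rw [_root_.mem_closure_iff] at hcl
      obtain ⟨d, hd1, hd2⟩ := hcl (Ioo (sSup (I x₁)) (sInf (I x₂))) isOpen_Ioo
        (by constructor <;> [linarith; linarith])
      exact ⟨d, hd1, hd2⟩
    have hd_not1 : α d * φ x₁ + β d * ψ x₁ < r'' := by
      by_contra hc2
      push_neg at hc2
      have : d ≤ sSup (I x₁) := le_csSup (hIbddA x₁) ⟨hdD.1, hc2⟩
      linarith [hdIoo.1]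
    have hd_not2 : α d * φ x₂ + β d * ψ x₂ < r'' := by
      by_contra hc2
      push_neg at hc2
      have : sInf (I x₂) ≤ d := csInf_le ⟨a, fun l hl => hl.1.1⟩ ⟨hdD.1, hc2⟩
      linarith [hdIoo.2]
    obtain ⟨v, c, hc, hray⟩ := RAY d hdD.2
    -- bound on the segment [x₁, x₂]
    have hseg : ∀ s : ℝ, 0 ≤ s → s ≤ 1 →
        α d * φ (x₁ + s • (x₂ - x₁)) + β d * ψ (x₁ + s • (x₂ - x₁)) ≤
          α d * φ x₁ + β d * ψ x₁ + |α d| * |φ (x₂ - x₁)| + |β d| * ((L : ℝ) * ‖x₂ - x₁‖) := by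
      intro s h0 h1
      have hφw : φ (x₁ + s • (x₂ - x₁)) = φ x₁ + s * φ (x₂ - x₁) := by simp
      have hl1 : |ψ (x₁ + s • (x₂ - x₁)) - ψ x₁| ≤ (L : ℝ) * (s * ‖x₂ - x₁‖) := by
        have h9 := hψlip.dist_le_mul (x₁ + s • (x₂ - x₁)) x₁
        rwa [Real.dist_eq, dist_eq_norm, add_sub_cancel_left, norm_smul,
          Real.norm_eq_abs, abs_of_nonneg h0] at h9
      have hψb : β d * ψ (x₁ + s • (x₂ - x₁)) - β d * ψ x₁ ≤ |β d| * ((L : ℝ) * ‖x₂ - x₁‖) := by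
        have hb1 : β d * ψ (x₁ + s • (x₂ - x₁)) - β d * ψ x₁ ≤
            |β d| * |ψ (x₁ + s • (x₂ - x₁)) - ψ x₁| := by
          rw [← abs_mul]
          calc β d * ψ (x₁ + s • (x₂ - x₁)) - β d * ψ x₁
              = β d * (ψ (x₁ + s • (x₂ - x₁)) - ψ x₁) := by ring
            _ ≤ |β d * (ψ (x₁ + s • (x₂ - x₁)) - ψ x₁)| := le_abs_self _
        have hb2 : |β d| * |ψ (x₁ + s • (x₂ - x₁)) - ψ x₁| ≤ |β d| * ((L : ℝ) * (s * ‖x₂ - x₁‖)) :=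
          mul_le_mul_of_nonneg_left hl1 (abs_nonneg _)
        have hb4 : (L : ℝ) * (s * ‖x₂ - x₁‖) ≤ (L : ℝ) * ‖x₂ - x₁‖ :=
          mul_le_mul_of_nonneg_left (by nlinarith [norm_nonneg (x₂ - x₁)]) L.coe_nonneg
        have hb5 := mul_le_mul_of_nonneg_left hb4 (abs_nonneg (β d))
        linarith
      have hφb : α d * (s * φ (x₂ - x₁)) ≤ |α d| * |φ (x₂ - x₁)| := by
        have hb3 := le_abs_self (α d * (s * φ (x₂ - x₁)))
        rw [abs_mul, abs_mul, abs_of_nonneg h0] at hb3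
        have hb6 : s * |φ (x₂ - x₁)| ≤ |φ (x₂ - x₁)| := by
          nlinarith [abs_nonneg (φ (x₂ - x₁))]
        have hb7 := mul_le_mul_of_nonneg_left hb6 (abs_nonneg (α d))
        linarith
      rw [hφw]
      nlinarith [hψb, hφb]
    set T := max 0 ((α d * φ x₁ + β d * ψ x₁ + |α d| * |φ (x₂ - x₁)| +
      |β d| * ((L : ℝ) * ‖x₂ - x₁‖) - r'' + 1) / c) with hT
    have hT0 : 0 ≤ T := le_max_left _ _
    have hTc : α d * φ x₁ + β d * ψ x₁ + |α d| * |φ (x₂ - x₁)| +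
        |β d| * ((L : ℝ) * ‖x₂ - x₁‖) - r'' + 1 ≤ T * c :=
      (div_le_iff₀ hc).mp (le_max_right _ _)
    -- the polyline K
    have hKconn : IsPreconnected ((segment ℝ x₁ (x₁ + T • v) ∪
        segment ℝ (x₁ + T • v) (x₂ + T • v)) ∪ segment ℝ (x₂ + T • v) x₂) := by
      apply IsPreconnected.union (x₂ + T • v)
      · exact Or.inr (right_mem_segment ℝ _ _)
      · exact left_mem_segment ℝ _ _
      · apply IsPreconnected.union (x₁ + T • v)
        · exact right_mem_segment ℝ _ _
        · exact left_mem_segment ℝ _ _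
        · exact (convex_segment _ _).isPreconnected
        · exact (convex_segment _ _).isPreconnected
      · exact (convex_segment _ _).isPreconnected
    have hK_lt : ∀ z ∈ (segment ℝ x₁ (x₁ + T • v) ∪
        segment ℝ (x₁ + T • v) (x₂ + T • v)) ∪ segment ℝ (x₂ + T • v) x₂,
        α d * φ z + β d * ψ z < r'' := by
      rintro z ((hz | hz) | hz)
      · obtain ⟨t1, t2, ht1, ht2, hsum, rfl⟩ := hz
        have heq : t1 • x₁ + t2 • (x₁ + T • v) = x₁ + (t2 * T) • v := by
          rw [show t1 = 1 - t2 by linarith]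
          module
        rw [heq]
        have hb := hray x₁ (t2 * T) (by positivity)
        nlinarith [mul_nonneg (mul_nonneg ht2 hT0) hc.le]
      · obtain ⟨t1, t2, ht1, ht2, hsum, rfl⟩ := hz
        have heq : t1 • (x₁ + T • v) + t2 • (x₂ + T • v) = (x₁ + t2 • (x₂ - x₁)) + T • v := by
          rw [show t1 = 1 - t2 by linarith]
          module
        rw [heq]
        have hb := hray (x₁ + t2 • (x₂ - x₁)) T hT0
        have hs := hseg t2 ht2 (by linarith)
        linarith
      · obtain ⟨t1, t2, ht1, ht2, hsum, rfl⟩ := hz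
        have heq : t1 • (x₂ + T • v) + t2 • x₂ = x₂ + (t1 * T) • v := by
          rw [show t2 = 1 - t1 by linarith]
          module
        rw [heq]
        have hb := hray x₂ (t1 * T) (by positivity)
        nlinarith [mul_nonneg (mul_nonneg ht1 hT0) hc.le]
    -- the open cover
    have hopen : ∀ p q : ℝ, a ≤ p → q ≤ b → p ≤ q →
        IsOpen {z : X | ∀ l ∈ Icc p q, α l * φ z + β l * ψ z < r''} := by
      intro p q hp hq hpq
      rw [Metric.isOpen_iff]
      intro z hz
      obtain ⟨l₀, hl₀, hmax⟩ := isCompact_Icc.exists_isMaxOn (nonempty_Icc.2 hpq)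
        ((hFcont z).mono (Icc_subset_Icc hp hq))
      obtain ⟨Cα, hCα⟩ := isCompact_Icc.exists_bound_of_continuousOn hα
      obtain ⟨Cβ, hCβ⟩ := isCompact_Icc.exists_bound_of_continuousOn hβ
      have hCα0 : 0 ≤ Cα := le_trans (norm_nonneg _) (hCα a haIcc)
      have hCβ0 : 0 ≤ Cβ := le_trans (norm_nonneg _) (hCβ a haIcc)
      have hM : α l₀ * φ z + β l₀ * ψ z < r'' := hz l₀ hl₀
      have hden : 0 < Cα * ‖φ‖ + Cβ * L + 1 := by
        nlinarith [mul_nonneg hCα0 (norm_nonneg φ), mul_nonneg hCβ0 L.coe_nonneg]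
      refine ⟨(r'' - (α l₀ * φ z + β l₀ * ψ z)) / (Cα * ‖φ‖ + Cβ * L + 1),
        div_pos (by linarith) hden, ?_⟩
      intro y hy
      rw [Metric.mem_ball, dist_eq_norm] at hy
      intro l hl
      have hlab : l ∈ Icc a b := Icc_subset_Icc hp hq hl
      have hαl : |α l| ≤ Cα := by have := hCα l hlab; rwa [Real.norm_eq_abs] at this
      have hβl : |β l| ≤ Cβ := by have := hCβ l hlab; rwa [Real.norm_eq_abs] at this
      have b1 : α l * φ y - α l * φ z ≤ Cα * (‖φ‖ * ‖y - z‖) := by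
        have e1 : α l * φ y - α l * φ z = α l * φ (y - z) := by rw [map_sub]; ring
        rw [e1]
        calc α l * φ (y - z) ≤ |α l * φ (y - z)| := le_abs_self _
          _ = |α l| * |φ (y - z)| := abs_mul _ _
          _ ≤ Cα * (‖φ‖ * ‖y - z‖) := by
            have := φ.le_opNorm (y - z)
            rw [Real.norm_eq_abs] at this
            exact mul_le_mul hαl this (abs_nonneg _) hCα0
      have b2 : β l * ψ y - β l * ψ z ≤ Cβ * ((L : ℝ) * ‖y - z‖) := by
        have hlip2 : |ψ y - ψ z| ≤ (L : ℝ) * ‖y - z‖ := by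
          have := hψlip.dist_le_mul y z
          rwa [Real.dist_eq, dist_eq_norm] at this
        calc β l * ψ y - β l * ψ z = β l * (ψ y - ψ z) := by ring
          _ ≤ |β l * (ψ y - ψ z)| := le_abs_self _
          _ = |β l| * |ψ y - ψ z| := abs_mul _ _
          _ ≤ Cβ * ((L : ℝ) * ‖y - z‖) := mul_le_mul hβl hlip2 (abs_nonneg _) hCβ0
      have h3 : α l * φ z + β l * ψ z ≤ α l₀ * φ z + β l₀ * ψ z := hmax hl
      have h4 : (Cα * ‖φ‖ + Cβ * L + 1) * ‖y - z‖ <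
          (Cα * ‖φ‖ + Cβ * L + 1) * ((r'' - (α l₀ * φ z + β l₀ * ψ z)) / (Cα * ‖φ‖ + Cβ * L + 1)) :=
        mul_lt_mul_of_pos_left hy hden
      have h5 : (Cα * ‖φ‖ + Cβ * L + 1) * ((r'' - (α l₀ * φ z + β l₀ * ψ z)) /
          (Cα * ‖φ‖ + Cβ * L + 1)) = r'' - (α l₀ * φ z + β l₀ * ψ z) :=
        mul_div_cancel₀ _ (ne_of_gt hden)
      nlinarith [norm_nonneg (y - z)]
    have hAopen := hopen d b hdD.1.1 le_rfl hdD.1.2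
    have hBopen := hopen a d le_rfl hdD.1.2 hdD.1.1
    have hcover : ((segment ℝ x₁ (x₁ + T • v) ∪ segment ℝ (x₁ + T • v) (x₂ + T • v)) ∪
        segment ℝ (x₂ + T • v) x₂) ⊆
        {z : X | ∀ l ∈ Icc d b, α l * φ z + β l * ψ z < r''} ∪
        {z : X | ∀ l ∈ Icc a d, α l * φ z + β l * ψ z < r''} := by
      intro z hz
      have hzd := hK_lt z hz
      by_cases hcase2 : ∃ θ, θ ∈ Icc a b ∧ d < θ ∧ r'' ≤ α θ * φ z + β θ * ψ z
      · right
        intro l hl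
        by_contra hc3
        push_neg at hc3
        obtain ⟨θ, hθIcc, hθd, hθval⟩ := hcase2
        rcases eq_or_lt_of_le hl.2 with heq | hlt
        · rw [heq] at hc3
          linarith
        · have hqc := QC z l d θ ⟨hl.1, hl.2.trans hdD.1.2⟩ hθIcc hl.2 hθd.le
          have hmin := le_min hc3 hθval
          linarith [le_trans hmin hqc]
      · left
        intro l hl
        by_contra hc3
        push_neg at hc3
        rcases eq_or_lt_of_le hl.1 with heq | hlt
        · rw [← heq] at hc3
          linarith
        · exact hcase2 ⟨l, ⟨hdD.1.1.trans hl.1, hl.2⟩, hlt, hc3⟩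
    have hx₁A : x₁ ∈ {z : X | ∀ l ∈ Icc d b, α l * φ z + β l * ψ z < r''} := by
      intro l hl
      rcases eq_or_lt_of_le hl.1 with heq | hlt
      · rw [← heq]; exact hd_not1
      · by_contra hc3
        push_neg at hc3
        have : l ≤ sSup (I x₁) := le_csSup (hIbddA x₁) ⟨⟨hdD.1.1.trans hl.1, hl.2⟩, hc3⟩
        linarith [hdIoo.1]
    have hx₂B : x₂ ∈ {z : X | ∀ l ∈ Icc a d, α l * φ z + β l * ψ z < r''} := by
      intro l hl
      rcases eq_or_lt_of_le hl.2 with heq | hlt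
      · rw [heq]; exact hd_not2
      · by_contra hc3
        push_neg at hc3
        have : sInf (I x₂) ≤ l := csInf_le ⟨a, fun l' hl' => hl'.1.1⟩
          ⟨⟨hl.1, hl.2.trans hdD.1.2⟩, hc3⟩
        linarith [hdIoo.2]
    obtain ⟨z, hzK, hzA, hzB⟩ := hKconn _ _ hAopen hBopen hcover
      ⟨x₁, Or.inl (Or.inl (left_mem_segment ℝ _ _)), hx₁A⟩
      ⟨x₂, Or.inr (right_mem_segment ℝ _ _), hx₂B⟩
    obtain ⟨l₀, hl₀, -, hval⟩ := PHI z
    rcases le_total l₀ d with hld | hld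
    · exact absurd (hzB l₀ ⟨hl₀.1, hld⟩) (not_lt.2 hval.le)
    · exact absurd (hzA l₀ ⟨hld, hl₀.2⟩) (not_lt.2 hval.le)
end

section
/- Let X be a topological space and φ, ψ, ω : X → ℝ continuous with ψ(x) > 0 for all x ∈ X and inf_{x∈X} φ(x)/ψ(x) > −∞. Set I := [ inf_X φ/ψ , sup_X φ/ψ ] ∩ ℝ (a nonempty interval, unbounded above if sup φ/ψ = +∞). Suppose that for each λ in a dense subset of I the function x ↦ e^{λ}(φ(x) + (1 − λ)ψ(x)) + ω(x) is inf-connected, and that there exists a (possibly different) topology τ₁ on X such that for each λ ∈ I the function x ↦ e^{λ}(φ(x) + (1 − λ)ψ(x)) + ω(x) is τ₁-lower semicontinuous and for some λ₀ ∈ I this function is τ₁-inf-compact. Then there exists x̃ ∈ X such that ψ(x̃) + e^{−φ(x̃)/ψ(x̃)}·ω(x̃) = inf_{x∈X} ( φ(x) + (1 − φ(x̃)/ψ(x̃))ψ(x) + e^{−φ(x̃)/ψ(x̃)}·ω(x) ). -/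
open Set Filter

private lemma aux_min {X : Type*} [TopologicalSpace X] [Nonempty X] {G h : X → ℝ}
    (hlsc : LowerSemicontinuous G) (hcpt : ∀ r : ℝ, IsCompact {x | h x ≤ r})
    (hle : ∀ x, h x ≤ G x) : ∃ x₀, ∀ x, G x₀ ≤ G x := by
  obtain ⟨x₀⟩ := ‹Nonempty X›
  have hclosed : ∀ r : ℝ, IsClosed {x | G x ≤ r} := by
    intro r
    have := hlsc.isClosed_preimage r
    simpa [Set.preimage, Set.Iic] using this
  have hScl : IsClosed {x | G x ≤ G x₀} := hclosed _
  have hScpt : IsCompact {x | G x ≤ G x₀} :=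
    (hcpt (G x₀)).of_isClosed_subset hScl fun x hx => le_trans (hle x) hx
  haveI : Nonempty {x | G x ≤ G x₀} := ⟨⟨x₀, by exact le_refl (G x₀)⟩⟩
  have key := IsCompact.nonempty_iInter_of_directed_nonempty_isCompact_isClosed
      (fun y : {x | G x ≤ G x₀} => {x | G x ≤ G y.1} ∩ {x | G x ≤ G x₀}) ?_ ?_ ?_ ?_
  · obtain ⟨xm, hxm⟩ := key
    simp only [Set.mem_iInter] at hxm
    refine ⟨xm, fun x => ?_⟩
    by_cases hx : G x ≤ G x₀
    · exact (hxm ⟨x, by exact hx⟩).1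
    · have h1 : G xm ≤ G x₀ := (hxm ⟨x₀, by exact le_refl (G x₀)⟩).1
      linarith [not_le.mp hx]
  · intro y z
    rcases le_total (G y.1) (G z.1) with h | h
    · exact ⟨y, fun w hw => hw, fun w hw => ⟨le_trans hw.1 h, hw.2⟩⟩
    · exact ⟨z, fun w hw => ⟨le_trans hw.1 h, hw.2⟩, fun w hw => hw⟩
  · exact fun y => ⟨y.1, by exact ⟨le_refl (G y.1), y.2⟩⟩
  · exact fun y => hScpt.of_isClosed_subset ((hclosed _).inter hScl) fun w hw => hw.2
  · exact fun y => (hclosed _).inter hScl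

/-- Theorem 3.5: with ψ > 0, inf φ/ψ > -∞, I = [inf φ/ψ, sup φ/ψ] ∩ ℝ,
inf-connectedness on a dense subset of I and the τ₁-compactness assumptions,
there exists x̃ with
ψ(x̃) + e^{-φ(x̃)/ψ(x̃)}ω(x̃) = inf_x (φ(x) + (1 - φ(x̃)/ψ(x̃))ψ(x) + e^{-φ(x̃)/ψ(x̃)}ω(x)). -/
theorem stmt12
    {X : Type*} [TopologicalSpace X]
    (φ ψ ω : X → ℝ)
    (hφ : Continuous φ) (hψ : Continuous ψ) (hω : Continuous ω)
    (hψ0 : ∀ x : X, 0 < ψ x)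
    (hbd : (⊥ : EReal) < ⨅ x : X, ((φ x / ψ x : ℝ) : EReal))
    (I : Set ℝ)
    (hIdef : I = {l : ℝ |
      (⨅ x : X, ((φ x / ψ x : ℝ) : EReal)) ≤ (l : EReal) ∧
      (l : EReal) ≤ ⨆ x : X, ((φ x / ψ x : ℝ) : EReal)})
    (D : Set ℝ) (hD : D ⊆ I) (hDdense : I ⊆ closure D)
    (hconn : ∀ l ∈ D, ∀ r : ℝ,
      IsPreconnected
        {x : X | Real.exp l * (φ x + (1 - l) * ψ x) + ω x < r})
    (τ₁ : TopologicalSpace X)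
    (hlsc : ∀ l ∈ I, @LowerSemicontinuous X ℝ τ₁ _
      (fun x => Real.exp l * (φ x + (1 - l) * ψ x) + ω x))
    (hinfcpt : ∃ l₀ ∈ I, ∀ r : ℝ,
      @IsCompact X τ₁
        {x : X | Real.exp l₀ * (φ x + (1 - l₀) * ψ x) + ω x ≤ r}) :
    ∃ xt : X, ∀ x : X,
      ψ xt + Real.exp (-(φ xt / ψ xt)) * ω xt ≤
      φ x + (1 - φ xt / ψ xt) * ψ x + Real.exp (-(φ xt / ψ xt)) * ω x := by
  classical
  rename_i τ₀
  letI : TopologicalSpace X := τ₀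
  obtain ⟨l₀, hl₀I, hcpt⟩ := hinfcpt
  -- X is nonempty
  have hX : Nonempty X := by
    by_contra h
    rw [not_nonempty_iff] at h
    haveI := h
    rw [hIdef] at hl₀I
    obtain ⟨h1, -⟩ := hl₀I
    rw [iInf_of_empty] at h1
    exact absurd (top_le_iff.mp h1) (EReal.coe_ne_top l₀)
  set s : X → ℝ := fun x => φ x / ψ x with hsdef
  have hψne : ∀ x, ψ x ≠ 0 := fun x => (hψ0 x).ne'
  have hscont : @Continuous X ℝ τ₀ _ s := hφ.div hψ hψne
  have hφeq : ∀ x, φ x = s x * ψ x := fun x => (div_mul_cancel₀ (φ x) (hψne x)).symm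
  have hsI : ∀ x, s x ∈ I := by
    intro x; rw [hIdef]
    exact ⟨iInf_le (fun x : X => ((φ x / ψ x : ℝ) : EReal)) x,
      le_iSup (fun x : X => ((φ x / ψ x : ℝ) : EReal)) x⟩
  -- pointwise comparison of F l x with its max over l, G x = exp (s x) * ψ x + ω x
  have key_le : ∀ (l : ℝ) (x : X),
      Real.exp l * (φ x + (1 - l) * ψ x) + ω x ≤ Real.exp (s x) * ψ x + ω x := by
    intro l x
    have h1 : φ x + (1 - l) * ψ x = (s x - l + 1) * ψ x := by rw [hφeq x]; ring
    have h3 : s x - l + 1 ≤ Real.exp (s x - l) := by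
      have := Real.add_one_le_exp (s x - l); linarith
    have h2 : Real.exp l * (s x - l + 1) ≤ Real.exp (s x) :=
      calc Real.exp l * (s x - l + 1) ≤ Real.exp l * Real.exp (s x - l) :=
            mul_le_mul_of_nonneg_left h3 (Real.exp_pos l).le
        _ = Real.exp (s x) := by rw [← Real.exp_add]; congr 1; ring
    have h4 := mul_le_mul_of_nonneg_right h2 (hψ0 x).le
    calc Real.exp l * (φ x + (1 - l) * ψ x) + ω x
        = Real.exp l * (s x - l + 1) * ψ x + ω x := by rw [h1]; ring
      _ ≤ Real.exp (s x) * ψ x + ω x := by linarith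
  have key_lt : ∀ (l : ℝ) (x : X), l ≠ s x →
      Real.exp l * (φ x + (1 - l) * ψ x) + ω x < Real.exp (s x) * ψ x + ω x := by
    intro l x hl
    have h1 : φ x + (1 - l) * ψ x = (s x - l + 1) * ψ x := by rw [hφeq x]; ring
    have h3 : s x - l + 1 < Real.exp (s x - l) := by
      have := Real.add_one_lt_exp (sub_ne_zero.mpr (Ne.symm hl)); linarith
    have h2 : Real.exp l * (s x - l + 1) < Real.exp (s x) :=
      calc Real.exp l * (s x - l + 1) < Real.exp l * Real.exp (s x - l) :=
            (mul_lt_mul_iff_right₀ (Real.exp_pos l)).mpr h3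
        _ = Real.exp (s x) := by rw [← Real.exp_add]; congr 1; ring
    have h4 := mul_lt_mul_of_pos_right h2 (hψ0 x)
    calc Real.exp l * (φ x + (1 - l) * ψ x) + ω x
        = Real.exp l * (s x - l + 1) * ψ x + ω x := by rw [h1]; ring
      _ < Real.exp (s x) * ψ x + ω x := by linarith
  have hGeq : ∀ x : X,
      Real.exp (s x) * (φ x + (1 - s x) * ψ x) + ω x = Real.exp (s x) * ψ x + ω x := by
    intro x; rw [hφeq x]; ring
  -- G is lower semicontinuous for τ₁
  have hGlsc : @LowerSemicontinuous X ℝ τ₁ _ (fun x => Real.exp (s x) * ψ x + ω x) := by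
    intro x y hy
    have hy' : y < Real.exp (s x) * (φ x + (1 - s x) * ψ x) + ω x := by
      rw [hGeq x]; exact hy
    have h := hlsc (s x) (hsI x) x y hy'
    exact h.mono fun z hz => lt_of_lt_of_le hz (key_le (s x) z)
  -- G attains its minimum
  obtain ⟨xb, hxb⟩ := @aux_min X τ₁ hX (fun x => Real.exp (s x) * ψ x + ω x)
      (fun x => Real.exp l₀ * (φ x + (1 - l₀) * ψ x) + ω x) hGlsc hcpt (fun x => key_le l₀ x)
  -- main claim: F (s xb) ≥ G xb everywhere
  have hmain : ∀ x : X, Real.exp (s xb) * ψ xb + ω xb ≤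
      Real.exp (s xb) * (φ x + (1 - s xb) * ψ x) + ω x := by
    by_contra hcon
    push_neg at hcon
    obtain ⟨y₀, hy₀⟩ := hcon
    set c : ℝ := Real.exp (s xb) * ψ xb + ω xb with hc
    have hGec : ∀ x : X, c ≤ Real.exp (s x) * ψ x + ω x := hxb
    have hy₀ne : s y₀ ≠ s xb := by
      intro h
      have h1 := hGeq y₀
      rw [h] at h1
      have h2 := hGec y₀
      rw [h] at h2
      rw [← h1] at h2
      exact absurd hy₀ (not_lt.mpr h2)
    set Om : Set ℝ :=
      ⋃ y : X, {l : ℝ | Real.exp l * (φ y + (1 - l) * ψ y) + ω y < c ∧ s y < l} with hOm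
    set Op : Set ℝ :=
      ⋃ y : X, {l : ℝ | Real.exp l * (φ y + (1 - l) * ψ y) + ω y < c ∧ l < s y} with hOp
    have hFycont : ∀ y : X,
        Continuous fun l : ℝ => Real.exp l * (φ y + (1 - l) * ψ y) + ω y := by
      intro y; fun_prop
    have hOmopen : IsOpen Om := by
      refine isOpen_iUnion fun y => ?_
      rw [Set.setOf_and]
      exact (isOpen_lt (hFycont y) continuous_const).inter
        (isOpen_lt continuous_const continuous_id)
    have hOpopen : IsOpen Op := by
      refine isOpen_iUnion fun y => ?_
      rw [Set.setOf_and]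
      exact (isOpen_lt (hFycont y) continuous_const).inter
        (isOpen_lt continuous_id continuous_const)
    -- disjointness on I via connectedness of sublevel sets for l ∈ D
    have hdisj : ∀ l ∈ I, l ∈ Om → l ∈ Op → False := by
      intro l hlI hm hp
      obtain ⟨μ, hμmem, hμD⟩ := _root_.mem_closure_iff.mp (hDdense hlI) (Om ∩ Op)
          (hOmopen.inter hOpopen) ⟨hm, hp⟩
      obtain ⟨y₁, hy₁⟩ := mem_iUnion.mp hμmem.1
      obtain ⟨y₂, hy₂⟩ := mem_iUnion.mp hμmem.2
      have hpc := hconn μ hμD c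
      have hsub : {x : X | Real.exp μ * (φ x + (1 - μ) * ψ x) + ω x < c}
          ⊆ {x : X | s x < μ} ∪ {x : X | μ < s x} := by
        intro x hx
        rcases lt_trichotomy (s x) μ with h | h | h
        · exact Or.inl h
        · exfalso
          have h1 : Real.exp μ * (φ x + (1 - μ) * ψ x) + ω x
              = Real.exp (s x) * ψ x + ω x := by rw [← h]; exact hGeq x
          have h2 := hGec x
          have hx' : Real.exp μ * (φ x + (1 - μ) * ψ x) + ω x < c := hx
          rw [h1] at hx'
          exact absurd hx' (not_lt.mpr h2)
        · exact Or.inr h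
      have hu : @IsOpen X τ₀ {x : X | s x < μ} :=
        isOpen_lt hscont (@continuous_const X ℝ τ₀ _ μ)
      have hv : @IsOpen X τ₀ {x : X | μ < s x} :=
        isOpen_lt (@continuous_const X ℝ τ₀ _ μ) hscont
      obtain ⟨z, hz1, hz2, hz3⟩ := hpc {x : X | s x < μ} {x : X | μ < s x}
          hu hv hsub ⟨y₁, by exact ⟨hy₁.1, hy₁.2⟩⟩ ⟨y₂, by exact ⟨hy₂.1, hy₂.2⟩⟩
      simp only [Set.mem_setOf_eq] at hz2 hz3
      exact lt_asymm hz2 hz3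
    -- I is preconnected
    have hIpre : IsPreconnected I := by
      have hoc : I.OrdConnected := by
        constructor
        intro a ha b hb z hz
        rw [hIdef] at ha hb ⊢
        exact ⟨ha.1.trans (EReal.coe_le_coe_iff.mpr hz.1),
          (EReal.coe_le_coe_iff.mpr hz.2).trans hb.2⟩
      exact hoc.isPreconnected
    -- I is covered by Om and Op
    have hcover : I ⊆ Om ∪ Op := by
      intro l hlI
      rcases lt_trichotomy l (s xb) with h | h | h
      · refine Or.inr (mem_iUnion.mpr ⟨xb, ?_, h⟩)
        have := key_lt l xb h.ne
        rw [← hc] at this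
        exact this
      · rcases hy₀ne.lt_or_gt with h2 | h2
        · refine Or.inl (mem_iUnion.mpr ⟨y₀, ?_, ?_⟩)
          · rw [h]; exact hy₀
          · rw [h]; exact h2
        · refine Or.inr (mem_iUnion.mpr ⟨y₀, ?_, ?_⟩)
          · rw [h]; exact hy₀
          · rw [h]; exact h2
      · refine Or.inl (mem_iUnion.mpr ⟨xb, ?_, h⟩)
        have := key_lt l xb h.ne'
        rw [← hc] at this
        exact this
    -- both Om and Op meet I
    have hMne : (I ∩ Om).Nonempty := by
      rcases hy₀ne.lt_or_gt with h2 | h2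
      · -- s y₀ < s xb : s xb ∈ Om with witness y₀
        exact ⟨s xb, hsI xb, mem_iUnion.mpr ⟨y₀, hy₀, h2⟩⟩
      · -- s xb < s y₀ : s y₀ ∈ Om with witness xb
        refine ⟨s y₀, hsI y₀, mem_iUnion.mpr ⟨xb, ?_, h2⟩⟩
        have := key_lt (s y₀) xb h2.ne'
        rw [← hc] at this
        exact this
    have hPne : (I ∩ Op).Nonempty := by
      rcases hy₀ne.lt_or_gt with h2 | h2
      · refine ⟨s y₀, hsI y₀, mem_iUnion.mpr ⟨xb, ?_, h2⟩⟩
        have := key_lt (s y₀) xb h2.ne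
        rw [← hc] at this
        exact this
      · exact ⟨s xb, hsI xb, mem_iUnion.mpr ⟨y₀, hy₀, h2⟩⟩
    obtain ⟨w, hwI, hwm, hwp⟩ := hIpre Om Op hOmopen hOpopen hcover hMne hPne
    exact hdisj w hwI hwm hwp
  -- conclude
  refine ⟨xb, fun x => ?_⟩
  have hsxb : φ xb / ψ xb = s xb := rfl
  rw [hsxb]
  have h1 := hmain x
  have h2 := mul_le_mul_of_nonneg_left h1 (Real.exp_pos (-(s xb))).le
  have hE : Real.exp (-(s xb)) * Real.exp (s xb) = 1 := by
    rw [← Real.exp_add]; simp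
  have expand1 : Real.exp (-(s xb)) * (Real.exp (s xb) * ψ xb + ω xb)
      = ψ xb + Real.exp (-(s xb)) * ω xb := by
    linear_combination ψ xb * hE
  have expand2 : Real.exp (-(s xb)) * (Real.exp (s xb) * (φ x + (1 - s xb) * ψ x) + ω x)
      = φ x + (1 - s xb) * ψ x + Real.exp (-(s xb)) * ω x := by
    linear_combination (φ x + (1 - s xb) * ψ x) * hE
  rw [expand1, expand2] at h2
  exact h2
end

section
/- Let X be a nonempty open subset of a real normed space E and let φ, ψ, ω : X → ℝ be continuous and Gateaux differentiable functions, with ψ(x) > 0 for all x ∈ X and inf_{x∈X} φ(x)/ψ(x) > −∞. Set I := [ inf_X φ/ψ , sup_X φ/ψ ] ∩ ℝ. Suppose that for each λ in a dense subset of I the function x ↦ e^{λ}(φ(x) + (1 − λ)ψ(x)) + ω(x) is inf-connected, and that there exists a (possibly different) topology τ₁ on X such that for each λ ∈ I the function x ↦ e^{λ}(φ(x) + (1 − λ)ψ(x)) + ω(x) is τ₁-lower semicontinuous and for some λ₀ ∈ I this function is τ₁-inf-compact. Then there exists x̃ ∈ X such that φ'(x̃) + (1 − φ(x̃)/ψ(x̃))·ψ'(x̃)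 + e^{−φ(x̃)/ψ(x̃)}·ω'(x̃) = 0 in E*. -/
open Set Filter

/-- A lower semicontinuous real function attains its minimum on a nonempty
compact set. -/
lemma lsc_compact_min {Y : Type*} [TopologicalSpace Y] {T : Set Y}
    (hT : IsCompact T) (hne : T.Nonempty) {f : Y → ℝ}
    (hf : LowerSemicontinuous f) : ∃ y ∈ T, ∀ z ∈ T, f y ≤ f z := by
  by_contra hcon
  push_neg at hcon
  have hcover : T ⊆ ⋃ z ∈ T, f ⁻¹' Ioi (f z) := by
    intro y hy
    obtain ⟨z, hz, hlt⟩ := hcon y hy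
    exact mem_biUnion hz hlt
  obtain ⟨s, hsT, hsfin, hscover⟩ :=
    hT.elim_finite_subcover_image
      (fun z _ => (lowerSemicontinuous_iff_isOpen_preimage.1 hf) (f z)) hcover
  obtain ⟨y₁, hy₁⟩ := hne
  have hsne : s.Nonempty := by
    rcases mem_iUnion₂.1 (hscover hy₁) with ⟨z, hz, _⟩
    exact ⟨z, hz⟩
  obtain ⟨z₀, hz₀s, hz₀min⟩ := Set.exists_min_image s f hsfin hsne
  rcases mem_iUnion₂.1 (hscover (hsT hz₀s)) with ⟨z, hzs, hzlt⟩
  exact absurd (hz₀min z hzs) (not_le.2 hzlt)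

/-- If `f` dominates an inf-compact function `g` and `f` is lower
semicontinuous, then `f` attains its global minimum. -/
lemma lsc_infcompact_min {Y : Type*} [TopologicalSpace Y] [Nonempty Y]
    (f g : Y → ℝ) (hfg : ∀ y, g y ≤ f y) (hf : LowerSemicontinuous f)
    (hg : ∀ r : ℝ, IsCompact {y | g y ≤ r}) : ∃ y₀, ∀ y, f y₀ ≤ f y := by
  obtain ⟨y₁⟩ := ‹Nonempty Y›
  set r := f y₁ with hr
  have hTsub : {y | f y ≤ r} ⊆ {y | g y ≤ r} := fun y hy => le_trans (hfg y) hy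
  have hTclosed : IsClosed {y | f y ≤ r} := hf.isClosed_preimage r
  have hTcpt : IsCompact {y | f y ≤ r} := (hg r).of_isClosed_subset hTclosed hTsub
  obtain ⟨y₀, hy₀T, hy₀min⟩ := lsc_compact_min hTcpt ⟨y₁, le_refl r⟩ hf
  refine ⟨y₀, fun y => ?_⟩
  by_cases hy : f y ≤ r
  · exact hy₀min y hy
  · exact le_trans (hy₀min y₁ (le_refl r)) (le_of_lt (not_le.1 hy))

/-- A pointwise supremum of lower semicontinuous functions which is attained
at each point is lower semicontinuous. -/
lemma lsc_of_attained_sup {Y : Type*} [TopologicalSpace Y] {ι : Sort*}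
    (f : Y → ℝ) (g : ι → Y → ℝ) (hg : ∀ i, LowerSemicontinuous (g i))
    (hle : ∀ i y, g i y ≤ f y) (hatt : ∀ y, ∃ i, g i y = f y) :
    LowerSemicontinuous f := by
  intro y₀ c hc
  obtain ⟨i, hi⟩ := hatt y₀
  have := hg i y₀ c (by show c < g i y₀; rw [hi]; exact hc)
  filter_upwards [this] with y hy
  exact lt_of_lt_of_le hy (hle i y)

/-- Corollary 3.4: under the assumptions of Theorem 3.5, with X an open subset
of a real normed space and φ, ψ, ω Gateaux differentiable, there exists x̃ ∈ X
with φ'(x̃) + (1 - φ(x̃)/ψ(x̃))ψ'(x̃) + e^{-φ(x̃)/ψ(x̃)}ω'(x̃) = 0. -/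
theorem stmt13
    {E : Type*} [NormedAddCommGroup E] [NormedSpace ℝ E]
    (X : Set E) (hXne : X.Nonempty) (hXo : IsOpen X)
    (φ ψ ω : E → ℝ) (φ' ψ' ω' : E → (E →L[ℝ] ℝ))
    (hφ : ContinuousOn φ X) (hψ : ContinuousOn ψ X) (hω : ContinuousOn ω X)
    (hφ' : ∀ x ∈ X, ∀ v : E, Tendsto (fun t : ℝ => (φ (x + t • v) - φ x) / t)
      (nhdsWithin 0 {0}ᶜ) (nhds (φ' x v)))
    (hψ' : ∀ x ∈ X, ∀ v : E, Tendsto (fun t : ℝ => (ψ (x + t • v) - ψ x) / t)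
      (nhdsWithin 0 {0}ᶜ) (nhds (ψ' x v)))
    (hω' : ∀ x ∈ X, ∀ v : E, Tendsto (fun t : ℝ => (ω (x + t • v) - ω x) / t)
      (nhdsWithin 0 {0}ᶜ) (nhds (ω' x v)))
    (hψ0 : ∀ x ∈ X, 0 < ψ x)
    (hbd : (⊥ : EReal) < ⨅ x ∈ X, ((φ x / ψ x : ℝ) : EReal))
    (I : Set ℝ)
    (hIdef : I = {l : ℝ |
      (⨅ x ∈ X, ((φ x / ψ x : ℝ) : EReal)) ≤ (l : EReal) ∧
      (l : EReal) ≤ ⨆ x ∈ X, ((φ x / ψ x : ℝ) : EReal)})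
    (D : Set ℝ) (hD : D ⊆ I) (hDdense : I ⊆ closure D)
    (hconn : ∀ l ∈ D, ∀ r : ℝ,
      IsPreconnected
        {x : E | x ∈ X ∧ Real.exp l * (φ x + (1 - l) * ψ x) + ω x < r})
    (τ₁ : TopologicalSpace X)
    (hlsc : ∀ l ∈ I, @LowerSemicontinuous X ℝ τ₁ _
      (fun x : X => Real.exp l * (φ x + (1 - l) * ψ x) + ω x))
    (hinfcpt : ∃ l₀ ∈ I, ∀ r : ℝ,
      @IsCompact X τ₁
        {x : X | Real.exp l₀ * (φ (x : E) + (1 - l₀) * ψ (x : E)) + ω (x : E) ≤ r}) :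
    ∃ xt ∈ X,
      φ' xt + (1 - φ xt / ψ xt) • ψ' xt + Real.exp (-(φ xt / ψ xt)) • ω' xt = 0 := by
  classical
  obtain ⟨l₀, hl₀I, hcpt⟩ := hinfcpt
  -- the "envelope" function h
  set h : E → ℝ := fun x => Real.exp (φ x / ψ x) * ψ x + ω x with hhdef
  -- key pointwise inequality : for each l, the function of Theorem 3.5 is ≤ h
  have hkey : ∀ x ∈ X, ∀ l : ℝ,
      Real.exp l * (φ x + (1 - l) * ψ x) + ω x ≤ h x := by
    intro x hx l
    have hψx : 0 < ψ x := hψ0 x hx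
    set m : ℝ := φ x / ψ x with hm
    have hφm : φ x = m * ψ x := by rw [hm, div_mul_cancel₀ _ hψx.ne']
    have h1 : (m - l) + 1 ≤ Real.exp (m - l) := Real.add_one_le_exp _
    have h2 : Real.exp l * Real.exp (m - l) = Real.exp m := by
      rw [← Real.exp_add]; ring_nf
    have h3 : (0 : ℝ) < Real.exp l := Real.exp_pos l
    simp only [hhdef, ← hm]
    nlinarith [mul_le_mul_of_nonneg_left h1
      (le_of_lt (mul_pos h3 hψx)), mul_pos h3 hψx]
  -- each value φ x / ψ x lies in I
  have hmemI : ∀ x ∈ X, φ x / ψ x ∈ I := by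
    intro x hx
    rw [hIdef]
    refine ⟨?_, ?_⟩
    · exact iInf₂_le x hx
    · exact le_iSup₂ (f := fun x _ => ((φ x / ψ x : ℝ) : EReal)) x hx
  -- h is τ₁-lower semicontinuous on X
  have hlsch : @LowerSemicontinuous X ℝ τ₁ _ (fun y : X => h (y : E)) := by
    refine @lsc_of_attained_sup X τ₁ {l : ℝ // l ∈ I} (fun y : X => h (y : E))
      (fun l (y : X) => Real.exp l.1 * (φ (y : E) + (1 - l.1) * ψ (y : E)) + ω (y : E))
      (fun l => hlsc l.1 l.2) (fun l y => hkey (y : E) y.2 l.1) (fun y => ?_)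
    refine ⟨⟨φ (y : E) / ψ (y : E), hmemI (y : E) y.2⟩, ?_⟩
    have hψy : 0 < ψ (y : E) := hψ0 (y : E) y.2
    have hφm : φ (y : E) = (φ (y : E) / ψ (y : E)) * ψ (y : E) := by field_simp
    simp only [hhdef]
    nlinarith [Real.exp_pos (φ (y : E) / ψ (y : E))]
  -- h attains its global minimum on X
  have : Nonempty X := hXne.to_subtype
  obtain ⟨y₀, hy₀⟩ := @lsc_infcompact_min X τ₁ _ (fun y : X => h (y : E))
    (fun y : X => Real.exp l₀ * (φ (y : E) + (1 - l₀) * ψ (y : E)) + ω (y : E))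
    (fun y => hkey (y : E) y.2 l₀) hlsch hcpt
  set x : E := (y₀ : E) with hxdef
  have hx : x ∈ X := y₀.2
  have hmin : ∀ z ∈ X, h x ≤ h z := fun z hz => hy₀ ⟨z, hz⟩
  refine ⟨x, hx, ?_⟩
  have hψx : 0 < ψ x := hψ0 x hx
  have hψne : ψ x ≠ 0 := ne_of_gt hψx
  -- pointwise (directional) computation
  ext v
  set a : ℝ := φ' x v with ha
  set b : ℝ := ψ' x v with hb
  set c : ℝ := ω' x v with hc
  -- derivatives along the line t ↦ x + t v
  have hline : ∀ (f : E → ℝ) (d : ℝ),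
      Tendsto (fun t : ℝ => (f (x + t • v) - f x) / t) (nhdsWithin 0 {0}ᶜ) (nhds d) →
      HasDerivAt (fun t : ℝ => f (x + t • v)) d 0 := by
    intro f d hf
    rw [hasDerivAt_iff_tendsto_slope]
    have heq : (fun t : ℝ => (f (x + t • v) - f x) / t)
        = slope (fun t : ℝ => f (x + t • v)) 0 := by
      funext t
      simp [slope_def_field]
    exact heq ▸ hf
  have hp : HasDerivAt (fun t : ℝ => φ (x + t • v)) a 0 := hline φ a (hφ' x hx v)
  have hq : HasDerivAt (fun t : ℝ => ψ (x + t • v)) b 0 := hline ψ b (hψ' x hx v)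
  have hw : HasDerivAt (fun t : ℝ => ω (x + t • v)) c 0 := hline ω c (hω' x hx v)
  have hq0 : ψ (x + (0 : ℝ) • v) ≠ 0 := by simpa using hψne
  have H := ((hp.div hq hq0).exp.mul hq).add hw
  simp only [zero_smul, add_zero] at H
  -- local minimum at t = 0
  have hloc : IsLocalMin (fun t : ℝ =>
      Real.exp (φ (x + t • v) / ψ (x + t • v)) * ψ (x + t • v) + ω (x + t • v)) 0 := by
    have hcont : Continuous fun t : ℝ => x + t • v :=
      continuous_const.add (continuous_id.smul continuous_const)
    have hx0 : x + (0 : ℝ) • v ∈ X := by simpa using hx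
    have hmem : ∀ᶠ t in nhds (0 : ℝ), x + t • v ∈ X :=
      hcont.continuousAt.preimage_mem_nhds (hXo.mem_nhds hx0)
    filter_upwards [hmem] with t ht
    have h0 : Real.exp (φ (x + (0 : ℝ) • v) / ψ (x + (0 : ℝ) • v)) * ψ (x + (0 : ℝ) • v)
        + ω (x + (0 : ℝ) • v) = h x := by simp [hhdef]
    have := hmin (x + t • v) ht
    simpa [h0, hhdef] using this
  have heq0 := hloc.hasDerivAt_eq_zero H
  -- final algebra
  simp only [ContinuousLinearMap.add_apply, ContinuousLinearMap.coe_smul',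
    Pi.smul_apply, smul_eq_mul, ContinuousLinearMap.zero_apply, ← ha, ← hb, ← hc]
  have hE : (0 : ℝ) < Real.exp (φ x / ψ x) := Real.exp_pos _
  rw [Real.exp_neg]
  simp only [Pi.div_apply, zero_smul, add_zero] at heq0
  field_simp at heq0 ⊢
  nlinarith [heq0, sq_nonneg (ψ x), hψx, hE]
end

section
/- Let a < b be reals and let α, β : [a,b] → ℝ be continuous functions that are C¹ on (a,b) with α'(λ) ≠ 0 for all λ ∈ (a,b), and such that g := β'/α' is strictly increasing on (a,b). Let p, q ∈ ℝ with q ≠ 0 and suppose α'(λ)·q < 0 for all λ ∈ (a,b). Set γ := inf_{(a,b)} g, δ := sup_{(a,b)} g, and define h : ℝ → [a,b] by h(μ) = g⁻¹(μ) if μ ∈ g((a,b)), h(μ) = a if μ ≤ γ, and h(μ) = b if μ ≥ δ. Then h(−p/q) is the unique global maximum point on [a,b] of the function λ ↦ α(λ)p + β(λ)q; that is, α(h(−p/q))p + β(h(−p/q))q > α(λ)p + β(λ)q for every λ ∈ [a,b] with λ ≠ h(−p/q). -/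
open Set

/-- The key step in the proof of Theorem 1.1 (case (i₃)): h(-p/q) is the unique
global maximum point on [a,b] of λ ↦ α(λ)p + β(λ)q. -/
theorem stmt15
    (a b : ℝ) (hab : a < b)
    (α β α' β' : ℝ → ℝ)
    (hα : ContinuousOn α (Icc a b)) (hβ : ContinuousOn β (Icc a b))
    (hα' : ∀ l ∈ Ioo a b, HasDerivAt α (α' l) l)
    (hβ' : ∀ l ∈ Ioo a b, HasDerivAt β (β' l) l)
    (hα'c : ContinuousOn α' (Ioo a b)) (hβ'c : ContinuousOn β' (Ioo a b))
    (hα'0 : ∀ l ∈ Ioo a b, α' l ≠ 0)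
    (g : ℝ → ℝ) (hg : ∀ l ∈ Ioo a b, g l = β' l / α' l)
    (hgmono : StrictMonoOn g (Ioo a b))
    (p q : ℝ) (hq : q ≠ 0)
    (hsign : ∀ l ∈ Ioo a b, α' l * q < 0)
    (h : ℝ → ℝ)
    (hhmem : ∀ μ : ℝ, h μ ∈ Icc a b)
    (hhinv : ∀ μ ∈ g '' Ioo a b, h μ ∈ Ioo a b ∧ g (h μ) = μ)
    (hha : ∀ μ : ℝ, (∀ l ∈ Ioo a b, μ ≤ g l) → h μ = a)
    (hhb : ∀ μ : ℝ, (∀ l ∈ Ioo a b, g l ≤ μ) → h μ = b) :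
    ∀ l ∈ Icc a b, l ≠ h (-(p / q)) →
      α l * p + β l * q < α (h (-(p / q))) * p + β (h (-(p / q))) * q := by
  set μ := -(p / q) with hμdef
  set F := fun x => α x * p + β x * q with hF
  have hFc : ContinuousOn F (Icc a b) :=
    (hα.mul continuousOn_const).add (hβ.mul continuousOn_const)
  have hFd : ∀ l ∈ Ioo a b, HasDerivAt F (α' l * p + β' l * q) l := fun l hl =>
    ((hα' l hl).mul_const p).add ((hβ' l hl).mul_const q)
  have hderivF : ∀ l ∈ Ioo a b, deriv F l = α' l * p + β' l * q := fun l hl =>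
    (hFd l hl).deriv
  have hfac : ∀ l ∈ Ioo a b, α' l * p + β' l * q = (α' l * q) * (g l - μ) := by
    intro l hl
    rw [hg l hl, hμdef]
    field_simp [hα'0 l hl]
    ring
  have hpos : ∀ l ∈ Ioo a b, g l < μ → 0 < deriv F l := by
    intro l hl hlt
    rw [hderivF l hl, hfac l hl]
    exact mul_pos_of_neg_of_neg (hsign l hl) (by linarith)
  have hneg : ∀ l ∈ Ioo a b, μ < g l → deriv F l < 0 := by
    intro l hl hlt
    rw [hderivF l hl, hfac l hl]
    exact mul_neg_of_neg_of_pos (hsign l hl) (by linarith)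
  by_cases hmem : μ ∈ g '' Ioo a b
  · obtain ⟨hm, hgm⟩ := hhinv μ hmem
    have hmono1 : StrictMonoOn F (Icc a (h μ)) := by
      apply strictMonoOn_of_deriv_pos (convex_Icc a (h μ))
        (hFc.mono (Icc_subset_Icc le_rfl hm.2.le))
      intro x hx
      rw [interior_Icc] at hx
      have hx' : x ∈ Ioo a b := ⟨hx.1, hx.2.trans hm.2⟩
      exact hpos x hx' (hgm ▸ hgmono hx' hm hx.2)
    have hanti1 : StrictAntiOn F (Icc (h μ) b) := by
      apply strictAntiOn_of_deriv_neg (convex_Icc (h μ) b)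
        (hFc.mono (Icc_subset_Icc hm.1.le le_rfl))
      intro x hx
      rw [interior_Icc] at hx
      have hx' : x ∈ Ioo a b := ⟨hm.1.trans hx.1, hx.2⟩
      exact hneg x hx' (hgm ▸ hgmono hm hx' hx.1)
    intro l hl hne
    rcases lt_or_gt_of_ne hne with hlt | hgt
    · exact hmono1 ⟨hl.1, hlt.le⟩ ⟨hm.1.le, le_rfl⟩ hlt
    · exact hanti1 ⟨le_rfl, hm.2.le⟩ ⟨hgt.le, hl.2⟩ hgt
  · have hcases : (∀ l ∈ Ioo a b, μ < g l) ∨ (∀ l ∈ Ioo a b, g l < μ) := by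
      by_contra hcon
      push_neg at hcon
      obtain ⟨⟨x, hx, hxle⟩, ⟨y, hy, hyle⟩⟩ := hcon
      have hxy : x < y := by
        rcases lt_trichotomy x y with h1 | h1 | h1
        · exact h1
        · subst h1
          exact absurd ⟨x, hx, le_antisymm hxle hyle⟩ hmem
        · have := hgmono hy hx h1
          exact absurd ⟨x, hx, le_antisymm hxle (by linarith)⟩ hmem
      have hgc : ContinuousOn g (Ioo a b) := (hβ'c.div hα'c hα'0).congr hg
      have hsub : Icc x y ⊆ Ioo a b := fun z hz =>
        ⟨hx.1.trans_le hz.1, hz.2.trans_lt hy.2⟩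
      have hiv : μ ∈ g '' Icc x y :=
        intermediate_value_Icc hxy.le (hgc.mono hsub) ⟨hxle, hyle⟩
      exact hmem (image_mono (f := g) hsub hiv)
    rcases hcases with hall | hall
    · have hma : h μ = a := hha μ (fun l hl => (hall l hl).le)
      have hanti : StrictAntiOn F (Icc a b) :=
        strictAntiOn_of_deriv_neg (convex_Icc a b) hFc
          (fun x hx => by rw [interior_Icc] at hx; exact hneg x hx (hall x hx))
      intro l hl hne
      rw [hma] at hne ⊢
      exact hanti (left_mem_Icc.2 hab.le) hl (lt_of_le_of_ne hl.1 (Ne.symm hne))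
    · have hmb : h μ = b := hhb μ (fun l hl => (hall l hl).le)
      have hmono : StrictMonoOn F (Icc a b) :=
        strictMonoOn_of_deriv_pos (convex_Icc a b) hFc
          (fun x hx => by rw [interior_Icc] at hx; exact hpos x hx (hall x hx))
      intro l hl hne
      rw [hmb] at hne ⊢
      exact hmono hl (right_mem_Icc.2 hab.le) (lt_of_le_of_ne hl.2 hne)
end
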